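/- Fix r ∈ (0,1). The function f(p1) = (p1 - p1^2/r)/(1 - p1^2/r) on the interval (0, r) attains its maximum uniquely at p1 = 1 - sqrt(1-r); that is, 1 - sqrt(1-r) ∈ (0, r) and for all p1 ∈ (0, r) with p1 ≠ 1 - sqrt(1-r), f(p1) < f(1 - sqrt(1-r)). -/

import Mathlib

theorem horse_TR_ratio_max (r : ℝ) (hr : r ∈ Set.Ioo (0:ℝ) 1) :
    (1 - Real.sqrt (1 - r) ∈ Set.Ioo (0:ℝ) r) ∧
    ∀ p1 ∈ Set.Ioo (0:ℝ) r, p1 ≠ 1 - Real.sqrt (1 - r) →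
      (p1 - p1 ^ 2 / r) / (1 - p1 ^ 2 / r) <
        ((1 - Real.sqrt (1 - r)) - (1 - Real.sqrt (1 - r)) ^ 2 / r) /
          (1 - (1 - Real.sqrt (1 - r)) ^ 2 / r) := by
  obtain ⟨hr0, hr1⟩ := hr
  set s := Real.sqrt (1 - r) with hs
  have hs2 : s ^ 2 = 1 - r := Real.sq_sqrt (by linarith)
  have hs0 : 0 < s := Real.sqrt_pos.2 (by linarith)
  have hs1 : s < 1 := by nlinarith
  refine ⟨⟨by linarith, by nlinarith⟩, ?_⟩
  intro p hp hne
  obtain ⟨hp0, hpr⟩ := hp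
  have hdq : 0 < 1 - (1 - s) ^ 2 / r := by
    rw [sub_pos, div_lt_one hr0]; nlinarith
  have hdp : 0 < 1 - p ^ 2 / r := by
    rw [sub_pos, div_lt_one hr0]; nlinarith
  rw [div_lt_div_iff₀ hdp hdq]
  have h2 : 0 < (p - (1 - s)) ^ 2 := by
    have := sub_ne_zero.2 hne
    positivity
  have hrne : r ≠ 0 := ne_of_gt hr0
  field_simp
  refine lt_of_mul_lt_mul_right ?_ (le_of_lt (mul_pos hr0 hr0))
  have key : ((1 - s) * r - (1 - s) ^ 2) * (r - p ^ 2) * (r * r) -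
      (p * r - p ^ 2) * (r - (1 - s) ^ 2) * (r * r) = r ^ 3 * s * (p - (1 - s)) ^ 2 := by
    linear_combination (-(r ^ 3) * (p - (1 - s))) * hs2
  nlinarith [key, mul_pos (mul_pos (pow_pos hr0 3) hs0) h2]
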